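/- Let A and A+E be Gram mates via a realizable matrix E of rank k. Then there exist k positive singular values of A whose corresponding right singular vectors form a basis of the row space of E (and whose corresponding left singular vectors form a basis of the column space of E). -/

import Mathlib

open Matrix

private theorem auxDC {N : ℕ} (s : Finset (Fin N))
    (hdc : ∀ i j : Fin N, j ≤ i → i ∈ s → j ∈ s) (i : Fin N) :
    i ∈ s ↔ (i : ℕ) < s.card := by
  constructor
  · intro hi
    have h1 : Finset.Iic i ⊆ s := fun j hj => hdc i j (Finset.mem_Iic.mp hj) hi
    have h2 := Finset.card_le_card h1
    rw [Fin.card_Iic] at h2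
    omega
  · intro hi
    by_contra hns
    have h1 : s ⊆ Finset.Iio i := by
      intro j hj
      rw [Finset.mem_Iio]
      by_contra hji
      exact hns (hdc j i (le_of_not_gt hji) hj)
    have h2 := Finset.card_le_card h1
    rw [Fin.card_Iio] at h2
    omega

private theorem auxSpanSmul {ι M : Type*} [AddCommGroup M] [Module ℝ M] (c : ι → ℝ)
    (hc : ∀ i, c i ≠ 0) (f : ι → M) :
    Submodule.span ℝ (Set.range fun i => c i • f i) = Submodule.span ℝ (Set.range f) := by
  apply le_antisymm <;> rw [Submodule.span_le] <;> rintro x ⟨i, rfl⟩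
  · exact Submodule.smul_mem _ _ (Submodule.subset_span ⟨i, rfl⟩)
  · have h : f i = (c i)⁻¹ • (c i • f i) := by
      rw [smul_smul, inv_mul_cancel₀ (hc i), one_smul]
    rw [h]
    exact Submodule.smul_mem _ _ (Submodule.subset_span ⟨i, rfl⟩)

private theorem auxInj {m n : ℕ} (A E : Matrix (Fin m) (Fin n) ℝ)
    (h5 : E * Eᵀ = -(A * Eᵀ) - E * Aᵀ)
    (y : Fin m → ℝ) (hAy : A *ᵥ (Eᵀ *ᵥ y) = 0) : Eᵀ *ᵥ y = 0 := by
  set x := Eᵀ *ᵥ y with hx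
  have key : x ⬝ᵥ x = 0 := by
    have s1 : x ⬝ᵥ x = y ⬝ᵥ (E *ᵥ x) := by
      rw [hx, mulVec_transpose, ← dotProduct_mulVec]
    have s2 : E *ᵥ x = -(E *ᵥ (Aᵀ *ᵥ y)) := by
      rw [hx, mulVec_mulVec, h5, Matrix.sub_mulVec, Matrix.neg_mulVec,
        ← mulVec_mulVec, ← mulVec_mulVec, hAy, neg_zero, zero_sub]
    have s3 : y ⬝ᵥ (E *ᵥ (Aᵀ *ᵥ y)) = 0 := by
      rw [dotProduct_mulVec, show y ᵥ* E = x from (mulVec_transpose E y).symm,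
        dotProduct_mulVec, vecMul_transpose, hAy, zero_dotProduct]
    rw [s1, s2, dotProduct_neg, s3, neg_zero]
  exact dotProduct_self_eq_zero.mp key

set_option maxHeartbeats 2000000 in
theorem stmt4 (m n k : ℕ) (A E : Matrix (Fin m) (Fin n) ℝ)
    (hA : ∀ i j, A i j = 0 ∨ A i j = 1)
    (hAE : ∀ i j, (A + E) i j = 0 ∨ (A + E) i j = 1)
    (hE : ∀ i j, E i j = 0 ∨ E i j = 1 ∨ E i j = -1)
    (hE0 : E ≠ 0)
    (hrow : E *ᵥ (fun _ => 1) = 0)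
    (hcol : (fun _ => 1) ᵥ* E = 0)
    (h1 : A * Aᵀ = (A + E) * (A + E)ᵀ)
    (h2 : Aᵀ * A = (A + E)ᵀ * (A + E))
    (hrank : E.rank = k) :
    ∃ (U : Matrix (Fin m) (Fin m) ℝ) (V : Matrix (Fin n) (Fin n) ℝ)
      (D : Matrix (Fin m) (Fin n) ℝ),
      (U * Uᵀ = 1 ∧ Uᵀ * U = 1) ∧ (V * Vᵀ = 1 ∧ Vᵀ * V = 1) ∧
      (∀ (i : Fin m) (j : Fin n), (i : ℕ) ≠ (j : ℕ) → D i j = 0) ∧ (∀ i j, 0 ≤ D i j) ∧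
      A = U * D * Vᵀ ∧
      ∃ (f : Fin k → Fin m) (g : Fin k → Fin n),
        (∀ i, (f i : ℕ) = (g i : ℕ)) ∧
        (∀ i, 0 < D (f i) (g i)) ∧
        LinearIndependent ℝ (fun i : Fin k => fun r => V r (g i)) ∧
        Submodule.span ℝ (Set.range fun i : Fin k => fun r => V r (g i)) =
          Submodule.span ℝ (Set.range fun i => E i) ∧
        LinearIndependent ℝ (fun i : Fin k => fun r => U r (f i)) ∧
        Submodule.span ℝ (Set.range fun i : Fin k => fun r => U r (f i)) =
          Submodule.span ℝ (Set.range fun j => Eᵀ j) := by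
  classical
  -- basic algebraic identities
  have ht1 : A * Eᵀ + E * Aᵀ + E * Eᵀ = 0 := by
    have h1' := h1
    rw [transpose_add] at h1'
    have hx : A * Eᵀ + E * Aᵀ + E * Eᵀ = (A + E) * (Aᵀ + Eᵀ) - A * Aᵀ := by
      simp only [Matrix.add_mul, Matrix.mul_add]; abel
    rw [hx, ← h1', sub_self]
  have ht2 : Aᵀ * E + Eᵀ * A + Eᵀ * E = 0 := by
    have h2' := h2
    rw [transpose_add] at h2'
    have hx : Aᵀ * E + Eᵀ * A + Eᵀ * E = (Aᵀ + Eᵀ) * (A + E) - Aᵀ * A := by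
      simp only [Matrix.add_mul, Matrix.mul_add]; abel
    rw [hx, ← h2', sub_self]
  have h5 : E * Eᵀ = -(A * Eᵀ) - E * Aᵀ := by
    rw [show -(A * Eᵀ) - E * Aᵀ = E * Eᵀ - (A * Eᵀ + E * Aᵀ + E * Eᵀ) from by abel, ht1, sub_zero]
  have hcomm : E * (Aᵀ * A) = A * Aᵀ * E := by
    have hid : E * (Aᵀ * A) - A * Aᵀ * E =
        (A * Eᵀ + E * Aᵀ + E * Eᵀ) * E + (A * Eᵀ + E * Aᵀ + E * Eᵀ) * A
          - A * (Aᵀ * E + Eᵀ * A + Eᵀ * E) - E * (Aᵀ * E + Eᵀ * A + Eᵀ * E) := by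
      simp only [Matrix.add_mul, Matrix.mul_add, ← Matrix.mul_assoc]; abel
    rw [ht1, ht2] at hid
    simp only [Matrix.zero_mul, Matrix.mul_zero, add_zero, sub_zero, zero_add] at hid
    exact sub_eq_zero.mp hid
  have hAET : A * Eᵀ = -(E * (A + E)ᵀ) := by
    rw [transpose_add, Matrix.mul_add,
      show -(E * Aᵀ + E * Eᵀ) = A * Eᵀ - (A * Eᵀ + E * Aᵀ + E * Eᵀ) from by abel, ht1, sub_zero]
  have hinj : ∀ y : Fin m → ℝ, A *ᵥ (Eᵀ *ᵥ y) = 0 → Eᵀ *ᵥ y = 0 :=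
    fun y hy => auxInj A E h5 y hy
  have hkn : k ≤ n := hrank ▸ E.rank_le_card_width.trans (Fintype.card_fin n).le
  -- euclidean setting
  set S : Matrix (Fin n) (Fin n) ℝ := Aᵀ * A with hS
  have hSsym : S.IsHermitian := by
    have h := isHermitian_conjTranspose_mul_self A; rwa [conjTranspose_eq_transpose_of_trivial] at h
  set T : EuclideanSpace ℝ (Fin n) →ₗ[ℝ] EuclideanSpace ℝ (Fin n) :=
    Matrix.toEuclideanLin S with hT
  have hTsym : T.IsSymmetric := Matrix.isHermitian_iff_isSymmetric.mp hSsym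
  have hTapp : ∀ v : EuclideanSpace ℝ (Fin n), T v = S *ᵥ v := fun v => rfl
  set W : Submodule ℝ (EuclideanSpace ℝ (Fin n)) :=
    LinearMap.range (Matrix.toEuclideanLin Eᵀ) with hW
  have hWmem : ∀ x : EuclideanSpace ℝ (Fin n), x ∈ W ↔ ∃ y : Fin m → ℝ, Eᵀ *ᵥ y = x := by
    intro x
    constructor
    · rintro ⟨y, rfl⟩; exact ⟨y, rfl⟩
    · rintro ⟨y, hy⟩; exact ⟨WithLp.toLp 2 y, WithLp.ofLp_injective 2 hy⟩
  have hcommT : S * Eᵀ = Eᵀ * (A * Aᵀ) := by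
    have h := congrArg Matrix.transpose hcomm
    simpa [hS, Matrix.transpose_mul, Matrix.mul_assoc] using h
  have hWinv : ∀ v ∈ W, T v ∈ W := by
    intro v hv
    obtain ⟨y, hy⟩ := (hWmem v).mp hv
    rw [hWmem, hTapp]
    exact ⟨(A * Aᵀ) *ᵥ y, by rw [← hy, mulVec_mulVec, mulVec_mulVec, hcommT]⟩
  have hfinW : Module.finrank ℝ W = k := by
    have h := Matrix.rank_eq_finrank_range_toLin Eᵀ
      (PiLp.basisFun 2 ℝ (Fin n)) (PiLp.basisFun 2 ℝ (Fin m))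
    have h2' : Eᵀ.rank = k := by rw [Matrix.rank_transpose, hrank]
    rw [← h2', h]; rfl
  -- the quadratic form
  have hinner : ∀ x y : EuclideanSpace ℝ (Fin n),
      (inner ℝ x y : ℝ) = (x : Fin n → ℝ) ⬝ᵥ (y : Fin n → ℝ) := by
    intro x y
    simp [PiLp.inner_apply, dotProduct, mul_comm]
  have hquad : ∀ v : EuclideanSpace ℝ (Fin n),
      (inner ℝ (T v) v : ℝ) = (A *ᵥ v) ⬝ᵥ (A *ᵥ v) := by
    intro v
    rw [hinner, hTapp]
    rw [show (S *ᵥ (v : Fin n → ℝ)) = Aᵀ *ᵥ (A *ᵥ v) from by rw [mulVec_mulVec],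
      mulVec_transpose, ← dotProduct_mulVec, dotProduct_comm]
  have hdotnn : ∀ w : Fin m → ℝ, 0 ≤ w ⬝ᵥ w :=
    fun w => Finset.sum_nonneg fun i _ => mul_self_nonneg _
  -- eigen decomposition of W
  have hTWsym : (T.restrict hWinv).IsSymmetric := hTsym.restrict_invariant hWinv
  set B1 : OrthonormalBasis (Fin k) ℝ W := hTWsym.eigenvectorBasis hfinW with hB1
  set μ1 : Fin k → ℝ := hTWsym.eigenvalues hfinW with hμ1
  have hB1eig : ∀ i, T ((B1 i : EuclideanSpace ℝ (Fin n))) = μ1 i • (B1 i : EuclideanSpace ℝ (Fin n)) := by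
    intro i
    have h := hTWsym.apply_eigenvectorBasis hfinW i
    have h2' := congrArg (Submodule.subtype W) h
    simp only [_root_.map_smul, Submodule.coe_subtype, LinearMap.restrict_coe_apply] at h2'
    exact h2'
  -- orthogonal complement
  have hWperp : ∀ v ∈ Wᗮ, T v ∈ Wᗮ := by
    intro v hv
    rw [Submodule.mem_orthogonal] at hv ⊢
    intro u hu
    rw [← hTsym u v]
    exact hv (T u) (hWinv u hu)
  have hfinWp : Module.finrank ℝ (Wᗮ : Submodule ℝ (EuclideanSpace ℝ (Fin n))) = n - k := by
    have h := Submodule.finrank_add_finrank_orthogonal (K := W)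
    rw [hfinW, finrank_euclideanSpace_fin] at h
    omega
  have hTWpsym : (T.restrict hWperp).IsSymmetric := hTsym.restrict_invariant hWperp
  set B2 : OrthonormalBasis (Fin (n - k)) ℝ (Wᗮ : Submodule ℝ (EuclideanSpace ℝ (Fin n))) :=
    hTWpsym.eigenvectorBasis hfinWp with hB2
  set μ2 : Fin (n - k) → ℝ := hTWpsym.eigenvalues hfinWp with hμ2
  have hB2eig : ∀ i, T ((B2 i : EuclideanSpace ℝ (Fin n))) = μ2 i • (B2 i : EuclideanSpace ℝ (Fin n)) := by
    intro i
    have h := hTWpsym.apply_eigenvectorBasis hfinWp i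
    have h2' := congrArg (Submodule.subtype Wᗮ) h
    simp only [_root_.map_smul, Submodule.coe_subtype, LinearMap.restrict_coe_apply] at h2'
    exact h2'
  -- eigenvalues are nonnegative
  have heignn : ∀ (v : EuclideanSpace ℝ (Fin n)) (μ : ℝ), T v = μ • v → ‖v‖ = 1 → 0 ≤ μ := by
    intro v μ hv hnv
    have h := hquad v
    rw [hv, real_inner_smul_left, real_inner_self_eq_norm_sq, hnv] at h
    simp only [one_pow, mul_one] at h
    rw [h]
    exact hdotnn _
  have heigzero : ∀ (v : EuclideanSpace ℝ (Fin n)) (μ : ℝ), T v = μ • v → ‖v‖ = 1 →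
      μ = 0 → A *ᵥ (v : Fin n → ℝ) = 0 := by
    intro v μ hv hnv h0
    have h := hquad v
    rw [hv, h0, zero_smul, inner_zero_left] at h
    exact dotProduct_self_eq_zero.mp h.symm
  have hμ1pos : ∀ i, 0 < μ1 i := by
    intro i
    have hnv : ‖(B1 i : EuclideanSpace ℝ (Fin n))‖ = 1 := by
      rw [Submodule.norm_coe]
      exact B1.orthonormal.1 i
    have hnn := heignn _ _ (hB1eig i) hnv
    rcases hnn.lt_or_eq with h | h
    · exact h
    · exfalso
      have hz := heigzero _ _ (hB1eig i) hnv h.symm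
      obtain ⟨y, hy⟩ := (hWmem _).mp (B1 i).2
      have := hinj y (by rw [hy]; exact hz)
      rw [hy] at this
      have hb0 : (B1 i : EuclideanSpace ℝ (Fin n)) ≠ 0 := by
        intro hc
        have := B1.toBasis.ne_zero i
        simp only [OrthonormalBasis.coe_toBasis] at this
        exact this (Subtype.ext hc)
      exact hb0 (WithLp.ofLp_injective 2 this)
  have hμ2nn : ∀ i, 0 ≤ μ2 i := by
    intro i
    have hnv : ‖(B2 i : EuclideanSpace ℝ (Fin n))‖ = 1 := by
      rw [Submodule.norm_coe]
      exact B2.orthonormal.1 i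
    exact heignn _ _ (hB2eig i) hnv
  -- sort the eigenvalues of the complement
  set σp : Equiv.Perm (Fin (n - k)) := Tuple.sort (fun i => -μ2 i) with hσp
  have hmono : Monotone ((fun i => -μ2 i) ∘ σp) := Tuple.monotone_sort _
  set s2 : Finset (Fin (n - k)) := Finset.univ.filter (fun i => μ2 (σp i) ≠ 0) with hs2
  set p : ℕ := s2.card with hp
  have hppos : ∀ i : Fin (n - k), μ2 (σp i) ≠ 0 ↔ (i : ℕ) < p := by
    intro i
    rw [hp, ← auxDC s2 ?_ i]
    · simp [hs2]
    · intro a b hba ha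
      simp only [hs2, Finset.mem_filter, Finset.mem_univ, true_and] at ha ⊢
      have h1 : -μ2 (σp b) ≤ -μ2 (σp a) := hmono hba
      intro hb
      rw [hb] at h1
      have h2'' : 0 < μ2 (σp a) := (hμ2nn _).lt_of_ne (Ne.symm ha)
      simp only [neg_zero] at h1
      linarith
    -- global eigenvector family
  set vfun : Fin n → EuclideanSpace ℝ (Fin n) := fun j =>
    if h : (j : ℕ) < k then (B1 ⟨j, h⟩ : EuclideanSpace ℝ (Fin n))
    else (B2 (σp ⟨(j : ℕ) - k, by have := j.isLt; omega⟩) : EuclideanSpace ℝ (Fin n)) with hvfun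
  set lam : Fin n → ℝ := fun j =>
    if h : (j : ℕ) < k then μ1 ⟨j, h⟩
    else μ2 (σp ⟨(j : ℕ) - k, by have := j.isLt; omega⟩) with hlam
  have hveig : ∀ j, T (vfun j) = lam j • vfun j := by
    intro j
    by_cases h : (j : ℕ) < k
    · simp only [hvfun, hlam, dif_pos h]; exact hB1eig _
    · simp only [hvfun, hlam, dif_neg h]; exact hB2eig _
  have horth : Orthonormal ℝ vfun := by
    rw [orthonormal_iff_ite]
    intro i j
    by_cases hi : (i : ℕ) < k <;> by_cases hj : (j : ℕ) < k
    · simp only [hvfun, dif_pos hi, dif_pos hj]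
      have h := orthonormal_iff_ite.mp B1.orthonormal ⟨i, hi⟩ ⟨j, hj⟩
      rw [Submodule.coe_inner] at h
      rw [h]
      congr 1
      simp only [Fin.mk.injEq, eq_iff_iff, Fin.val_inj]
    · have hij : i ≠ j := fun hc => hj (hc ▸ hi)
      rw [if_neg hij]
      simp only [hvfun, dif_pos hi, dif_neg hj]
      have hm := (B2 (σp ⟨(j : ℕ) - k, by have := j.isLt; omega⟩)).2
      rw [Submodule.mem_orthogonal] at hm
      exact hm _ (B1 ⟨i, hi⟩).2
    · have hij : i ≠ j := fun hc => hi (hc ▸ hj)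
      rw [if_neg hij]
      simp only [hvfun, dif_neg hi, dif_pos hj]
      have hm := (B2 (σp ⟨(i : ℕ) - k, by have := i.isLt; omega⟩)).2
      rw [Submodule.mem_orthogonal] at hm
      rw [real_inner_comm]
      exact hm _ (B1 ⟨j, hj⟩).2
    · simp only [hvfun, dif_neg hi, dif_neg hj]
      have h := orthonormal_iff_ite.mp B2.orthonormal
        (σp ⟨(i : ℕ) - k, by have := i.isLt; omega⟩) (σp ⟨(j : ℕ) - k, by have := j.isLt; omega⟩)
      rw [Submodule.coe_inner] at h
      rw [h]
      congr 1
      simp only [eq_iff_iff, EmbeddingLike.apply_eq_iff_eq, Fin.mk.injEq]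
      constructor
      · intro hc; exact Fin.ext (by omega)
      · intro hc; omega
  have hnormv : ∀ j, ‖vfun j‖ = 1 := horth.1
  have hlamnn : ∀ j, 0 ≤ lam j := by
    intro j
    by_cases h : (j : ℕ) < k
    · simp only [hlam, dif_pos h]; exact (hμ1pos _).le
    · simp only [hlam, dif_neg h]; exact hμ2nn _
  have hlampos_iff : ∀ j : Fin n, lam j ≠ 0 ↔ (j : ℕ) < k + p := by
    intro j
    by_cases h : (j : ℕ) < k
    · simp only [hlam, dif_pos h]
      constructor
      · intro _; omega
      · intro _; exact ne_of_gt (hμ1pos _)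
    · simp only [hlam, dif_neg h]
      rw [hppos]
      show ((j : ℕ) - k < p) ↔ ((j : ℕ) < k + p)
      omega
  have hAv0 : ∀ j, lam j = 0 → (A *ᵥ (vfun j : Fin n → ℝ)) = 0 :=
    fun j h0 => heigzero _ _ (hveig j) (hnormv j) h0
  have hAdot : ∀ i j : Fin n, (A *ᵥ (vfun i : Fin n → ℝ)) ⬝ᵥ (A *ᵥ (vfun j : Fin n → ℝ))
      = lam i * (if i = j then 1 else 0) := by
    intro i j
    rw [dotProduct_mulVec, ← mulVec_transpose, mulVec_mulVec]
    rw [show Aᵀ * A = S from rfl]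
    rw [show S *ᵥ (vfun i : Fin n → ℝ) = lam i • (vfun i : Fin n → ℝ) from by
      rw [← hTapp]; exact congrArg WithLp.ofLp (hveig i)]
    rw [smul_dotProduct, smul_eq_mul]
    congr 1
    have h := orthonormal_iff_ite.mp horth i j
    rw [hinner] at h
    exact h
  -- count of positive eigenvalues
  have hpn : p ≤ n - k := by
    calc p ≤ Finset.univ.card := Finset.card_le_univ s2
    _ = n - k := by simp
  have hrn : k + p ≤ n := by omega
  set wfam : Fin (k + p) → EuclideanSpace ℝ (Fin m) := fun i =>
    (Real.sqrt (lam (Fin.castLE hrn i)))⁻¹ •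
      (WithLp.toLp 2 (A *ᵥ (vfun (Fin.castLE hrn i) : Fin n → ℝ)) : EuclideanSpace ℝ (Fin m)) with hwfam
  have hlamposr : ∀ i : Fin (k + p), 0 < lam (Fin.castLE hrn i) := by
    intro i
    have hi : ((Fin.castLE hrn i : Fin n) : ℕ) < k + p := i.2
    exact (hlamnn _).lt_of_ne (Ne.symm ((hlampos_iff _).mpr hi))
  have hinnerm : ∀ x y : EuclideanSpace ℝ (Fin m),
      (inner ℝ x y : ℝ) = (x : Fin m → ℝ) ⬝ᵥ (y : Fin m → ℝ) := by
    intro x y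
    simp [PiLp.inner_apply, dotProduct, mul_comm]
  have horthw : Orthonormal ℝ wfam := by
    rw [orthonormal_iff_ite]
    intro i j
    simp only [hwfam]
    rw [real_inner_smul_left, real_inner_smul_right, hinnerm, WithLp.ofLp_toLp, WithLp.ofLp_toLp, hAdot]
    by_cases hij : i = j
    · subst hij
      have hpos := hlamposr i
      simp only [eq_self_iff_true, if_true]
      rw [mul_one, ← mul_assoc, ← mul_inv, Real.mul_self_sqrt hpos.le,
        inv_mul_cancel₀ hpos.ne']
    · rw [if_neg (fun hc => hij ((Fin.castLE_injective hrn) hc)), if_neg hij,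
        mul_zero, mul_zero, mul_zero]
  have hrm : k + p ≤ m := by
    have h := horthw.linearIndependent.fintype_card_le_finrank
    simpa using h
  have hkm : k ≤ m := le_trans (Nat.le_add_right k p) hrm
  -- orthonormal basis of the left space extending the images
  set sset : Set (Fin m) := {i : Fin m | (i : ℕ) < k + p} with hsset
  set v' : Fin m → EuclideanSpace ℝ (Fin m) := fun i =>
    if h : (i : ℕ) < k + p then wfam ⟨i, h⟩ else 0 with hv'
  have horthv' : Orthonormal ℝ (sset.restrict v') := by
    rw [orthonormal_iff_ite]
    rintro ⟨i, hi⟩ ⟨j, hj⟩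
    have hi' : (i : ℕ) < k + p := hi
    have hj' : (j : ℕ) < k + p := hj
    simp only [Set.restrict, Set.domRestrict_apply, hv', dif_pos hi', dif_pos hj']
    have h := orthonormal_iff_ite.mp horthw ⟨(i : ℕ), hi'⟩ ⟨(j : ℕ), hj'⟩
    rw [h]
    congr 1
    simp only [Fin.mk.injEq, eq_iff_iff, Fin.val_inj, Subtype.mk.injEq]
  obtain ⟨bU, hbU⟩ := horthv'.exists_orthonormalBasis_extension_of_card_eq (by simp)
  -- the three matrices
  set Vm : Matrix (Fin n) (Fin n) ℝ := Matrix.of (fun a b => (vfun b : Fin n → ℝ) a) with hVm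
  set Um : Matrix (Fin m) (Fin m) ℝ := Matrix.of (fun a b => (bU b : Fin m → ℝ) a) with hUm
  set Dm : Matrix (Fin m) (Fin n) ℝ :=
    Matrix.of (fun i j => if (i : ℕ) = (j : ℕ) then Real.sqrt (lam j) else 0) with hDm
  have hVtV : Vmᵀ * Vm = 1 := by
    ext a b
    rw [Matrix.mul_apply]
    simp only [hVm, transpose_apply, of_apply]
    have h := orthonormal_iff_ite.mp horth a b
    rw [hinner] at h
    rw [show (∑ x, (vfun a : Fin n → ℝ) x * (vfun b : Fin n → ℝ) x)
      = (vfun a : Fin n → ℝ) ⬝ᵥ (vfun b : Fin n → ℝ) from rfl, h, Matrix.one_apply]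
  have hVVt : Vm * Vmᵀ = 1 := mul_eq_one_comm.mp hVtV
  have hUtU : Umᵀ * Um = 1 := by
    ext a b
    rw [Matrix.mul_apply]
    simp only [hUm, transpose_apply, of_apply]
    have h := orthonormal_iff_ite.mp bU.orthonormal a b
    rw [hinnerm] at h
    rw [show (∑ x, (bU a : Fin m → ℝ) x * (bU b : Fin m → ℝ) x)
      = (bU a : Fin m → ℝ) ⬝ᵥ (bU b : Fin m → ℝ) from rfl, h, Matrix.one_apply]
  have hUUt : Um * Umᵀ = 1 := mul_eq_one_comm.mp hUtU
  -- A * V = U * D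
  have hAV : A * Vm = Um * Dm := by
    ext i j
    rw [Matrix.mul_apply, Matrix.mul_apply]
    have hl : ∑ x, A i x * Vm x j = (A *ᵥ (vfun j : Fin n → ℝ)) i := rfl
    rw [hl]
    by_cases h0 : lam j = 0
    · rw [hAv0 j h0]
      simp only [hDm, hUm, of_apply, Pi.zero_apply]
      symm
      apply Finset.sum_eq_zero
      intro x _
      by_cases hx : (x : ℕ) = (j : ℕ)
      · rw [if_pos hx, h0, Real.sqrt_zero, mul_zero]
      · rw [if_neg hx, mul_zero]
    · have hjr : (j : ℕ) < k + p := (hlampos_iff j).mp h0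
      have hjm : (j : ℕ) < m := lt_of_lt_of_le hjr hrm
      have hsingle : ∀ x : Fin m, x ≠ ⟨(j : ℕ), hjm⟩ → Um i x * Dm x j = 0 := by
        intro x hx
        have : ¬ ((x : ℕ) = (j : ℕ)) := fun hc => hx (Fin.ext hc)
        simp only [hDm, of_apply, if_neg this, mul_zero]
      rw [Finset.sum_eq_single (⟨(j : ℕ), hjm⟩ : Fin m)
        (fun x _ hx => hsingle x hx) (fun hmem => absurd (Finset.mem_univ _) hmem)]
      have hmems : (⟨(j : ℕ), hjm⟩ : Fin m) ∈ sset := hjr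
      have hbUj := hbU _ hmems
      simp only [hv', dif_pos hjr] at hbUj
      have hcast : (Fin.castLE hrn ⟨(j : ℕ), hjr⟩ : Fin n) = j := Fin.ext rfl
      have hpos : 0 < lam j := (hlamnn j).lt_of_ne (Ne.symm h0)
      have hsne : Real.sqrt (lam j) ≠ 0 := Real.sqrt_ne_zero'.mpr hpos
      simp only [hUm, hDm, of_apply, hbUj, hwfam, hcast, eq_self_iff_true, if_true]
      show (A *ᵥ (vfun j : Fin n → ℝ)) i
        = (Real.sqrt (lam j))⁻¹ * (A *ᵥ (vfun j : Fin n → ℝ)) i * Real.sqrt (lam j)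
      field_simp
  have hAUDV : A = Um * Dm * Vmᵀ := by
    calc A = A * (Vm * Vmᵀ) := by rw [hVVt, Matrix.mul_one]
    _ = A * Vm * Vmᵀ := by rw [Matrix.mul_assoc]
    _ = Um * Dm * Vmᵀ := by rw [hAV]
  -- index functions
  set f : Fin k → Fin m := fun i => ⟨(i : ℕ), lt_of_lt_of_le i.2 hkm⟩ with hf
  set g : Fin k → Fin n := fun i => ⟨(i : ℕ), lt_of_lt_of_le i.2 hkn⟩ with hg
  have hlamg : ∀ i : Fin k, lam (g i) = μ1 i := by
    intro i
    simp only [hlam, hg, dif_pos i.2]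
  have hvfung : ∀ i : Fin k, vfun (g i) = (B1 i : EuclideanSpace ℝ (Fin n)) := by
    intro i
    simp only [hvfun, hg, dif_pos i.2]
  -- columns of V at g
  have hVcol : (fun i : Fin k => (fun rr => Vm rr (g i)))
      = fun i : Fin k => ((B1 i : W) : Fin n → ℝ) := by
    funext i rr
    simp only [hVm, of_apply, hvfung]
  -- columns of U at f
  have hfmem : ∀ i : Fin k, (f i) ∈ sset := by
    intro i
    have : (i : ℕ) < k + p := by omega
    exact this
  have hUcolw : ∀ i : Fin k, bU (f i) = wfam ⟨(i : ℕ), by omega⟩ := by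
    intro i
    have h := hbU _ (hfmem i)
    simp only [hv', hf, dif_pos (show ((i : ℕ)) < k + p by omega)] at h
    exact h
  -- linear independence of the B1 columns, in pi world
  have horthB1coe : Orthonormal ℝ (fun i : Fin k => ((B1 i : W) : EuclideanSpace ℝ (Fin n))) := by
    rw [orthonormal_iff_ite]
    intro i j
    rw [← Submodule.coe_inner]
    exact orthonormal_iff_ite.mp B1.orthonormal i j
  have hLIB1 : LinearIndependent ℝ (fun i : Fin k => ((B1 i : W) : Fin n → ℝ)) :=
    horthB1coe.linearIndependent.map' _ (WithLp.linearEquiv 2 ℝ (Fin n → ℝ)).ker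
  -- span of rows of E
  have hrowsE : Submodule.span ℝ (Set.range fun i => E i) = LinearMap.range (Matrix.mulVecLin Eᵀ) := by
    rw [Matrix.range_mulVecLin]; rfl
  have hfinrowsE : Module.finrank ℝ (Submodule.span ℝ (Set.range fun i => E i)) = k := by
    rw [hrowsE, ← hrank, ← Matrix.rank_transpose E]
    rfl
  have hspanV : Submodule.span ℝ (Set.range fun i : Fin k => ((B1 i : W) : Fin n → ℝ))
      = Submodule.span ℝ (Set.range fun i => E i) := by
    have hle : Submodule.span ℝ (Set.range fun i : Fin k => ((B1 i : W) : Fin n → ℝ))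
        ≤ Submodule.span ℝ (Set.range fun i => E i) := by
      rw [Submodule.span_le]
      rintro x ⟨i, rfl⟩
      rw [hrowsE]
      obtain ⟨y, hy⟩ := (hWmem _).mp (B1 i).2
      exact ⟨y, hy⟩
    refine Submodule.eq_of_le_of_finrank_le hle ?_
    rw [hfinrowsE, finrank_span_eq_card hLIB1, Fintype.card_fin]
  -- span of columns of E
  have hcolsE : Submodule.span ℝ (Set.range fun j => Eᵀ j) = LinearMap.range (Matrix.mulVecLin E) := by
    rw [Matrix.range_mulVecLin]; rfl
  have hfincolsE : Module.finrank ℝ (Submodule.span ℝ (Set.range fun j => Eᵀ j)) = k := by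
    rw [hcolsE, ← hrank]
    rfl
  -- orthonormality of U columns
  have horthUcol : Orthonormal ℝ (fun i : Fin k => bU (f i)) :=
    bU.orthonormal.comp f (fun a b hab => by
      have : (a : ℕ) = (b : ℕ) := by
        simpa [hf] using congrArg Fin.val hab
      exact Fin.ext this)
  have hLIU : LinearIndependent ℝ (fun i : Fin k => (bU (f i) : Fin m → ℝ)) :=
    horthUcol.linearIndependent.map' _ (WithLp.linearEquiv 2 ℝ (Fin m → ℝ)).ker
  have hUcolfun : (fun i : Fin k => (fun rr => Um rr (f i)))
      = fun i : Fin k => (bU (f i) : Fin m → ℝ) := by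
    funext i rr
    simp only [hUm, of_apply]
  have hspanU : Submodule.span ℝ (Set.range fun i : Fin k => (bU (f i) : Fin m → ℝ))
      = Submodule.span ℝ (Set.range fun j => Eᵀ j) := by
    have hle : Submodule.span ℝ (Set.range fun i : Fin k => (bU (f i) : Fin m → ℝ))
        ≤ Submodule.span ℝ (Set.range fun j => Eᵀ j) := by
      rw [Submodule.span_le]
      rintro x ⟨i, rfl⟩
      rw [hcolsE]
      obtain ⟨y, hy⟩ := (hWmem _).mp (B1 i).2
      refine ⟨(Real.sqrt (μ1 i))⁻¹ • (-((A + E)ᵀ *ᵥ y)), ?_⟩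
      have hEz : E *ᵥ (-((A + E)ᵀ *ᵥ y)) = A *ᵥ (Eᵀ *ᵥ y) := by
        rw [Matrix.mulVec_neg, mulVec_mulVec, ← Matrix.neg_mulVec, ← hAET, ← mulVec_mulVec]
      have hwval : bU (f i)
          = (Real.sqrt (μ1 i))⁻¹ • (WithLp.toLp 2 (A *ᵥ ((B1 i : W) : Fin n → ℝ)) : EuclideanSpace ℝ (Fin m)) := by
        rw [hUcolw i]
        simp only [hwfam]
        have hcasti : (Fin.castLE hrn ⟨(i : ℕ), by omega⟩ : Fin n) = g i := Fin.ext rfl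
        rw [hcasti, hlamg, hvfung]
      show E.mulVecLin ((Real.sqrt (μ1 i))⁻¹ • (-((A + E)ᵀ *ᵥ y))) = _
      rw [Matrix.mulVecLin_apply, Matrix.mulVec_smul, hEz]
      show (Real.sqrt (μ1 i))⁻¹ • (A *ᵥ (Eᵀ *ᵥ y)) = bU (f i)
      rw [hwval, ← hy]
      rfl
    refine Submodule.eq_of_le_of_finrank_le hle ?_
    have e2 : Module.finrank ℝ
        (Submodule.span ℝ (Set.range fun i : Fin k => (bU (f i) : Fin m → ℝ))) = k := by
      rw [finrank_span_eq_card hLIU, Fintype.card_fin]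
    exact le_of_eq (hfincolsE.trans e2.symm)
  -- final assembly
  refine ⟨Um, Vm, Dm, ⟨hUUt, hUtU⟩, ⟨hVVt, hVtV⟩, ?_, ?_, hAUDV, f, g, ?_, ?_, ?_, ?_, ?_, ?_⟩
  · intro i j hne
    simp only [hDm, of_apply, if_neg hne]
  · intro i j
    simp only [hDm, of_apply]
    split
    · exact Real.sqrt_nonneg _
    · exact le_refl 0
  · intro i; rfl
  · intro i
    simp only [hDm, of_apply, hf, hg, if_pos rfl]
    rw [show lam (g i) = μ1 i from hlamg i]
    exact Real.sqrt_pos.mpr (hμ1pos i)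
  · rw [show (fun i : Fin k => fun rr => Vm rr (g i))
      = fun i : Fin k => ((B1 i : W) : Fin n → ℝ) from hVcol]
    exact hLIB1
  · rw [show (Set.range fun i : Fin k => fun rr => Vm rr (g i))
      = Set.range fun i : Fin k => ((B1 i : W) : Fin n → ℝ) from by rw [hVcol]]
    exact hspanV
  · rw [show (fun i : Fin k => fun rr => Um rr (f i))
      = fun i : Fin k => (bU (f i) : Fin m → ℝ) from hUcolfun]
    exact hLIU
  · rw [show (Set.range fun i : Fin k => fun rr => Um rr (f i))
      = Set.range fun i : Fin k => (bU (f i) : Fin m → ℝ) from by rw [hUcolfun]]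
    exact hspanU
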